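/- Pigeonhole lemma for directions: if 2m + 1 closed half-planes through the origin in ℝ² are given (each bounded by a line through the origin), then the plane is divided by the 2m + 1 boundary lines into at most 4m + 2 sectors, and there exists a sector of angle at least π/(2m + 1) that is contained in at least m + 1 of the half-planes. -/

import Mathlib

open Real

lemma nonneg_on_of_pos_mid {f : ℝ → ℝ} (hf : Continuous f) {α β : ℝ} (hab : α < β)
    (hnz : ∀ x ∈ Set.Ioo α β, f x ≠ 0) (hmid : 0 < f ((α + β) / 2)) :
    ∀ x ∈ Set.Icc α β, 0 ≤ f x := by
  intro x hx
  by_contra h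
  push_neg at h
  set mid := (α + β) / 2 with hm
  have hmid1 : α < mid := by rw [hm]; linarith
  have hmid2 : mid < β := by rw [hm]; linarith
  have key : (0:ℝ) ∈ Set.uIcc (f x) (f mid) := by
    rw [Set.mem_uIcc]; left; exact ⟨le_of_lt h, le_of_lt hmid⟩
  obtain ⟨ζ, hζ, hfζ⟩ := intermediate_value_uIcc (a := x) (b := mid) hf.continuousOn key
  have hne : ζ ≠ x := fun he => by rw [he] at hfζ; linarith
  have hio : ζ ∈ Set.Ioo α β := by
    rcases le_total x mid with hle | hle
    · rw [Set.uIcc_of_le hle] at hζ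
      exact ⟨lt_of_le_of_lt hx.1 (lt_of_le_of_ne hζ.1 (Ne.symm hne)), lt_of_le_of_lt hζ.2 hmid2⟩
    · rw [Set.uIcc_of_ge hle] at hζ
      exact ⟨lt_of_lt_of_le hmid1 hζ.1, lt_of_lt_of_le (lt_of_le_of_ne hζ.2 hne) hx.2⟩
  exact hnz ζ hio hfζ

/-- Pigeonhole lemma for directions: among 2m+1 closed half-planes through the
origin in ℝ², there is a sector of angle at least π/(2m+1) contained in at least
m+1 of the half-planes. -/
theorem halfplane_pigeonhole (m : ℕ) (v : Fin (2*m+1) → ℝ × ℝ)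
    (hv : ∀ i, (v i).1^2 + (v i).2^2 = 1) :
    ∃ θ₀ δ : ℝ, Real.pi / (2*(m:ℝ)+1) ≤ δ ∧
      ∃ T : Finset (Fin (2*m+1)), m + 1 ≤ T.card ∧
        ∀ θ ∈ Set.Icc θ₀ (θ₀ + δ), ∀ i ∈ T,
          0 ≤ Real.cos θ * (v i).1 + Real.sin θ * (v i).2 := by
  have hden : (0:ℝ) < 2*(m:ℝ)+1 := by positivity
  -- complex number / angle for each direction
  set z : Fin (2*m+1) → ℂ := fun i => ⟨(v i).1, (v i).2⟩ with hz
  have habs : ∀ i, ‖z i‖ = 1 := by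
    intro i
    rw [hz]
    simp only [Complex.norm_def, Complex.normSq_mk]
    rw [show (v i).1 * (v i).1 + (v i).2 * (v i).2 = 1 by nlinarith [hv i]]
    exact Real.sqrt_one
  have hzne : ∀ i, z i ≠ 0 := by
    intro i h
    have := habs i
    rw [h] at this
    simp at this
  set φ : Fin (2*m+1) → ℝ := fun i => Complex.arg (z i) with hφ
  have hcos : ∀ i, Real.cos (φ i) = (v i).1 := by
    intro i
    rw [hφ]
    simp only
    rw [Complex.cos_arg (hzne i), habs i]
    simp [hz]
  have hsin : ∀ i, Real.sin (φ i) = (v i).2 := by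
    intro i
    rw [hφ]
    simp only
    rw [Complex.sin_arg, habs i]
    simp [hz]
  -- angles of boundary lines, normalized to [0, π)
  set ψ : Fin (2*m+1) → ℝ := fun i => π * Int.fract ((φ i + π/2) / π) with hψ
  have hψ0 : ∀ i, 0 ≤ ψ i := fun i => by
    rw [hψ]; exact mul_nonneg pi_pos.le (Int.fract_nonneg _)
  have hψπ : ∀ i, ψ i < π := fun i => by
    rw [hψ]
    calc π * Int.fract ((φ i + π/2) / π) < π * 1 :=
          (mul_lt_mul_iff_right₀ pi_pos).2 (Int.fract_lt_one _)
      _ = π := mul_one π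
  have hψeq : ∀ i, ∃ n : ℤ, φ i + π/2 = ψ i + n * π := by
    intro i
    refine ⟨⌊(φ i + π/2) / π⌋, ?_⟩
    simp only [hψ]
    rw [← Int.self_sub_floor]
    field_simp
    ring
  -- zeros of cos (θ - φ i) are at ψ i + ℤ π
  have hzero : ∀ i θ, Real.cos (θ - φ i) = 0 → ∃ n : ℤ, θ = ψ i + n * π := by
    intro i θ hc
    rw [Real.cos_eq_zero_iff] at hc
    obtain ⟨n, hn⟩ := hc
    obtain ⟨n₀, hn₀⟩ := hψeq i
    refine ⟨n + n₀, ?_⟩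
    have : θ = φ i + π/2 + n * π := by linarith
    rw [this, hn₀]; push_cast; ring
  -- sort the boundary angles
  set σ := Tuple.sort ψ with hσ
  set w : Fin (2*m+1) → ℝ := ψ ∘ σ with hw
  have hmono : Monotone w := Tuple.monotone_sort ψ
  have hψw : ∀ i, ψ i = w (σ.symm i) := by
    intro i; rw [hw]; simp
  have hw0 : ∀ r, 0 ≤ w r := fun r => hψ0 _
  have hwπ : ∀ r, w r < π := fun r => hψπ _
  -- extended sequence
  set W : ℕ → ℝ := fun k => if h : k < 2*m+1 then w ⟨k, h⟩ else w 0 + π with hW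
  have hWsum : ∑ k ∈ Finset.range (2*m+1), (W (k+1) - W k) = π := by
    rw [Finset.sum_range_sub]
    have h1 : W (2*m+1) = w 0 + π := by rw [hW]; simp
    have h2 : W 0 = w 0 := by
      rw [hW]; simp only [dif_pos (Nat.succ_pos _)]
      congr 1
    rw [h1, h2]; ring
  -- pigeonhole: some gap has length ≥ π/(2m+1)
  have hgap : ∃ k < 2*m+1, π / (2*(m:ℝ)+1) ≤ W (k+1) - W k := by
    by_contra h
    push_neg at h
    have hlt : ∑ k ∈ Finset.range (2*m+1), (W (k+1) - W k)
        < ∑ _k ∈ Finset.range (2*m+1), π / (2*(m:ℝ)+1) := by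
      apply Finset.sum_lt_sum_of_nonempty
      · exact ⟨0, Finset.mem_range.2 (Nat.succ_pos _)⟩
      · intro k hk
        exact h k (Finset.mem_range.1 hk)
    rw [hWsum, Finset.sum_const, Finset.card_range, nsmul_eq_mul] at hlt
    have : ((2*m+1 : ℕ) : ℝ) * (π / (2*(m:ℝ)+1)) = π := by
      push_cast
      field_simp
    rw [this] at hlt
    exact lt_irrefl _ hlt
  obtain ⟨k, hk, hkgap⟩ := hgap
  set α := W k with hα
  set β := W (k+1) with hβ
  have hαβ : α < β := by
    have : 0 < π / (2*(m:ℝ)+1) := by positivity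
    linarith
  -- the open interval (α, β) contains no zero of any cos (θ - φ i)
  have hnozero : ∀ x ∈ Set.Ioo α β, ∀ i, Real.cos (x - φ i) ≠ 0 := by
    intro x hx i hc
    obtain ⟨n, hn⟩ := hzero i x hc
    set r := σ.symm i with hr
    have hxr : x = w r + n * π := by rw [hn, hψw i]
    have hkα : α = w ⟨k, hk⟩ := by rw [hα, hW]; simp [hk]
    have hw0r : w 0 ≤ w r := hmono (Fin.zero_le r)
    have hwrlast : w r ≤ w ⟨2*m, by omega⟩ := by
      apply hmono
      have := r.isLt
      rw [Fin.le_def]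
      simp
      omega
    rcases Nat.lt_or_ge (k+1) (2*m+1) with hk1 | hk1
    · -- interior gap: β = w ⟨k+1⟩, interval inside [0, π)
      have hkβ : β = w ⟨k+1, hk1⟩ := by rw [hβ, hW]; simp [hk1]
      have hx0 : 0 ≤ x := le_of_lt (lt_of_le_of_lt (by rw [hkα]; exact hw0 _) hx.1)
      have hxπ : x < π := lt_of_lt_of_le hx.2 (by rw [hkβ]; exact (hwπ _).le)
      have hn0 : n = 0 := by
        have h1 : (n:ℝ) * π < π := by
          have := hψ0 i; rw [hn] at hxπ; linarith
        have h2 : -π < (n:ℝ) * π := by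
          have := hψπ i; rw [hn] at hx0; linarith
        have : (n:ℝ) < 1 := by
          by_contra hc'; push_neg at hc'
          nlinarith [pi_pos]
        have : (-1:ℝ) < (n:ℝ) := by
          by_contra hc'; push_neg at hc'
          nlinarith [pi_pos]
        have hn1 : n < 1 := by exact_mod_cast ‹(n:ℝ) < 1›
        have hn2 : -1 < n := by exact_mod_cast ‹(-1:ℝ) < (n:ℝ)›
        omega
      rw [hn0] at hxr
      simp at hxr
      rcases Nat.lt_or_ge (r : ℕ) (k+1) with hrk | hrk
      · have : w r ≤ w ⟨k, hk⟩ := hmono (Fin.le_def.2 (by simpa using Nat.lt_succ_iff.1 hrk))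
        rw [← hkα] at this
        rw [hxr] at hx
        exact absurd hx.1 (not_lt.2 this)
      · have : w ⟨k+1, hk1⟩ ≤ w r := hmono (Fin.le_def.2 (by simpa using hrk))
        rw [← hkβ] at this
        rw [hxr] at hx
        exact absurd hx.2 (not_lt.2 this)
    · -- last gap: β = w 0 + π
      have hk2m : k = 2*m := by omega
      have hkβ : β = w 0 + π := by rw [hβ, hW]; simp [show ¬ (k+1 < 2*m+1) by omega]
      have hkα' : α = w ⟨2*m, by omega⟩ := by rw [hkα]; congr 1; exact Fin.ext hk2m
      have hx0 : 0 ≤ x := le_of_lt (lt_of_le_of_lt (by rw [hkα]; exact hw0 _) hx.1)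
      have hx2π : x < 2*π := lt_of_lt_of_le hx.2 (by rw [hkβ]; have := hwπ 0; linarith)
      have hn01 : n = 0 ∨ n = 1 := by
        have h1 : (n:ℝ) * π < 2*π := by
          have := hψ0 i; rw [hn] at hx2π; linarith
        have h2 : -π < (n:ℝ) * π := by
          have := hψπ i; rw [hn] at hx0; linarith
        have : (n:ℝ) < 2 := by
          by_contra hc'; push_neg at hc'
          nlinarith [pi_pos]
        have : (-1:ℝ) < (n:ℝ) := by
          by_contra hc'; push_neg at hc'
          nlinarith [pi_pos]
        have hn1 : n < 2 := by exact_mod_cast ‹(n:ℝ) < 2›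
        have hn2 : -1 < n := by exact_mod_cast ‹(-1:ℝ) < (n:ℝ)›
        omega
      rcases hn01 with hn0 | hn1
      · rw [hn0] at hxr
        simp at hxr
        have : w r ≤ α := by rw [hkα']; exact hmono (Fin.le_def.2 (by simp; omega))
        rw [hxr] at hx
        exact absurd hx.1 (not_lt.2 this)
      · rw [hn1] at hxr
        simp at hxr
        have : β ≤ w r + π := by rw [hkβ]; linarith [hw0r]
        rw [hxr] at hx
        exact absurd hx.2 (not_lt.2 this)
  -- split by sign at midpoint
  set mid := (α + β) / 2 with hmid
  have hmidmem : mid ∈ Set.Ioo α β := ⟨by rw [hmid]; linarith, by rw [hmid]; linarith⟩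
  have hmidne : ∀ i, Real.cos (mid - φ i) ≠ 0 := fun i => hnozero mid hmidmem i
  set Tp : Finset (Fin (2*m+1)) := Finset.univ.filter (fun i => 0 < Real.cos (mid - φ i)) with hTp
  set Tn : Finset (Fin (2*m+1)) := Finset.univ.filter (fun i => ¬ 0 < Real.cos (mid - φ i)) with hTn
  have hcard : Tp.card + Tn.card = 2*m+1 := by
    rw [hTp, hTn, Finset.card_filter_add_card_filter_not]
    simp
  have hcont : ∀ i, Continuous (fun θ : ℝ => Real.cos (θ - φ i)) := by
    intro i
    exact Real.continuous_cos.comp (continuous_id.sub continuous_const)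
  have hgoal : ∀ i θ, 0 ≤ Real.cos (θ - φ i) →
      0 ≤ Real.cos θ * (v i).1 + Real.sin θ * (v i).2 := by
    intro i θ h
    rwa [Real.cos_sub, hcos, hsin] at h
  rcases Nat.lt_or_ge Tp.card (m+1) with hTpc | hTpc
  · -- negative side wins: use interval [α + π, β + π]
    have hTnc : m + 1 ≤ Tn.card := by omega
    refine ⟨α + π, β - α, hkgap, Tn, hTnc, ?_⟩
    intro θ hθ i hi
    have hneg : Real.cos (mid - φ i) < 0 := by
      rw [hTn, Finset.mem_filter] at hi
      rcases lt_trichotomy (Real.cos (mid - φ i)) 0 with h | h | h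
      · exact h
      · exact absurd h (hmidne i)
      · exact absurd h hi.2
    have key := nonneg_on_of_pos_mid (f := fun θ => -Real.cos (θ - φ i))
      (hcont i).neg hαβ
      (fun x hx => by simpa using hnozero x hx i)
      (by simpa using hneg)
    have hθ' : θ - π ∈ Set.Icc α β := by
      constructor
      · have := hθ.1; linarith
      · have := hθ.2; linarith
    have := key (θ - π) hθ'
    simp only [neg_nonneg] at this
    apply hgoal
    have heq : Real.cos (θ - φ i) = -Real.cos (θ - π - φ i) := by
      rw [show θ - φ i = (θ - π - φ i) + π by ring, Real.cos_add_pi]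
    rw [heq]
    linarith
  · -- positive side wins: use interval [α, β]
    refine ⟨α, β - α, hkgap, Tp, hTpc, ?_⟩
    intro θ hθ i hi
    have hpos : 0 < Real.cos (mid - φ i) := by
      rw [hTp, Finset.mem_filter] at hi
      exact hi.2
    have key := nonneg_on_of_pos_mid (f := fun θ => Real.cos (θ - φ i))
      (hcont i) hαβ
      (fun x hx => hnozero x hx i)
      hpos
    have hθ' : θ ∈ Set.Icc α β := by
      constructor
      · exact hθ.1
      · have := hθ.2; linarith
    exact hgoal i θ (key θ hθ')
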